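/- (Lemma: preserving Lagrangian submanifolds characterizes conformally symplectic embeddings.) Let n ≥ 2, let U ⊆ E be open and connected, and let φ : U → E be a smooth embedding. Then the following are equivalent: (1) there exists a nonzero real constant c such that ω₀(Dφ_p u, Dφ_p v) = c · ω₀(u, v) for all p ∈ U and u, v ∈ E (φ is conformally symplectic); (2) for every closed smooth n-manifold L and every Lagrangian embedding ι : L → E with ι(L) ⊆ U, the composition φ ∘ ι : L → E is a Lagrangian embedding. -/

import Mathlib

set_option maxHeartbeats 1000000


open scoped Manifold

/-- `E n` is `ℝ^{2n}`, identified with `(Fin n → ℝ) × (Fin n → ℝ)`. -/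
abbrev E (n : ℕ) := (Fin n → ℝ) × (Fin n → ℝ)

/-- The standard symplectic form `ω₀` on `E n`. -/
def omega0 {n : ℕ} (u v : E n) : ℝ := ∑ i, (u.1 i * v.2 i - u.2 i * v.1 i)

/-- `φ` is a smooth embedding of the open set `U ⊆ E n` into `E n`. -/
def SmoothEmbeddingOn {n : ℕ} (φ : E n → E n) (U : Set (E n)) : Prop :=
  ContDiffOn ℝ (⊤ : ℕ∞) φ U ∧ Set.InjOn φ U ∧
    ∀ p ∈ U, Function.Injective (fderiv ℝ φ p)

/-- A `C^∞` map `ι : L → E n` from a manifold modeled on `EuclideanSpace ℝ (Fin n)` is a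
Lagrangian embedding if it is injective, immersive, and `ω₀` vanishes on the image of
each of its manifold derivatives. -/
def IsLagrangianEmbedding {n : ℕ} {L : Type} [TopologicalSpace L]
    [ChartedSpace (EuclideanSpace ℝ (Fin n)) L] (ι : L → E n) : Prop :=
  ContMDiff (𝓡 n) 𝓘(ℝ, E n) (⊤ : ℕ∞) ι ∧ Function.Injective ι ∧
    (∀ x : L, Function.Injective (mfderiv (𝓡 n) 𝓘(ℝ, E n) ι x)) ∧
    ∀ (x : L) (u v : TangentSpace (𝓡 n) x),
      omega0 (mfderiv (𝓡 n) 𝓘(ℝ, E n) ι x u) (mfderiv (𝓡 n) 𝓘(ℝ, E n) ι x v) = 0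

/-- A closed smooth `n`-manifold: a compact, connected `C^∞` manifold without boundary
modeled on `EuclideanSpace ℝ (Fin n)`. -/
structure ClosedManifold (n : ℕ) where
  carrier : Type
  [top : TopologicalSpace carrier]
  [charted : ChartedSpace (EuclideanSpace ℝ (Fin n)) carrier]
  [smooth : IsManifold (𝓡 n) (⊤ : ℕ∞) carrier]
  [cpt : CompactSpace carrier]
  [conn : ConnectedSpace carrier]

attribute [instance] ClosedManifold.top ClosedManifold.charted ClosedManifold.smooth
  ClosedManifold.cpt ClosedManifold.conn

namespace Helper

variable {n : ℕ}

/-- omega0 as a bilinear map. -/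
def OmL (n : ℕ) : E n →ₗ[ℝ] E n →ₗ[ℝ] ℝ :=
  LinearMap.mk₂ ℝ omega0
    (by intro a b c; simp only [omega0]; rw [← Finset.sum_add_distrib]
        refine Finset.sum_congr rfl fun i _ => ?_
        simp [Prod.fst_add, Prod.snd_add]; ring)
    (by intro r a b; simp only [omega0, Finset.smul_sum]
        refine Finset.sum_congr rfl fun i _ => ?_
        simp [Prod.smul_fst, Prod.smul_snd]; ring)
    (by intro a b c; simp only [omega0]; rw [← Finset.sum_add_distrib]
        refine Finset.sum_congr rfl fun i _ => ?_
        simp [Prod.fst_add, Prod.snd_add]; ring)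
    (by intro r a b; simp only [omega0, Finset.smul_sum]
        refine Finset.sum_congr rfl fun i _ => ?_
        simp [Prod.smul_fst, Prod.smul_snd]; ring)

@[simp] lemma OmL_apply (u v : E n) : OmL n u v = omega0 u v := rfl

lemma omega0_self (u : E n) : omega0 u u = 0 := by
  simp only [omega0]
  refine Finset.sum_eq_zero fun i _ => by ring

lemma omega0_antisymm (u v : E n) : omega0 u v = - omega0 v u := by
  simp only [omega0, ← Finset.sum_neg_distrib]
  refine Finset.sum_congr rfl fun i _ => by ring

/-- basis vectors -/
def ee (i : Fin n) : E n := (Pi.single i 1, 0)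
def ff (i : Fin n) : E n := (0, Pi.single i 1)

lemma omega0_ee_ee (i j : Fin n) : omega0 (ee i) (ee j) = 0 := by
  simp [omega0, ee]

lemma omega0_ff_ff (i j : Fin n) : omega0 (ff i) (ff j) = 0 := by
  simp [omega0, ff]

lemma omega0_ee_ff (i j : Fin n) : omega0 (ee i) (ff j) = if i = j then 1 else 0 := by
  simp only [omega0, ee, ff]
  rw [Finset.sum_congr rfl (g := fun k => Pi.single i 1 k * Pi.single j 1 k) (fun k _ => by simp)]
  rcases eq_or_ne i j with h | h
  · subst h
    rw [Finset.sum_eq_single i (fun k _ hk => by simp [Pi.single_apply, hk]) (by simp)]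
    simp
  · simp only [if_neg h]
    refine Finset.sum_eq_zero fun k _ => ?_
    rcases eq_or_ne k i with rfl | hk
    · simp [Pi.single_apply, h]
    · simp [Pi.single_apply, hk]

lemma omega0_ff_ee (i j : Fin n) : omega0 (ff i) (ee j) = if i = j then -1 else 0 := by
  rw [omega0_antisymm, omega0_ee_ff]
  simp [eq_comm]; split <;> simp

lemma decomp (u : E n) : u = (∑ i, u.1 i • ee i) + (∑ i, u.2 i • ff i) := by
  ext k
  · simp only [Prod.fst_add, Prod.fst_sum, Prod.smul_fst, ee, ff, smul_zero]
    simp [Finset.sum_apply, Pi.single_apply, Finset.sum_ite_eq']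
  · simp only [Prod.snd_add, Prod.snd_sum, Prod.smul_snd, ee, ff, smul_zero]
    simp [Finset.sum_apply, Pi.single_apply, Finset.sum_ite_eq']



lemma col_expand (B : E n →ₗ[ℝ] E n →ₗ[ℝ] ℝ) (a v : E n) :
    B a v = ∑ j, (v.1 j * B a (ee j) + v.2 j * B a (ff j)) := by
  conv_lhs => rw [decomp v]
  simp only [map_add, map_sum, map_smul, smul_eq_mul, Finset.sum_add_distrib]

lemma row_expand (B : E n →ₗ[ℝ] E n →ₗ[ℝ] ℝ) (u v : E n) :
    B u v = ∑ i, (u.1 i * B (ee i) v + u.2 i * B (ff i) v) := by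
  conv_lhs => rw [decomp u]
  simp only [map_add, map_sum, map_smul, LinearMap.add_apply, LinearMap.sum_apply,
    LinearMap.smul_apply, smul_eq_mul, Finset.sum_add_distrib]

/-- The key bilinear-extension lemma. -/
lemma bilinear_eq_smul_omega (B : E n →ₗ[ℝ] E n →ₗ[ℝ] ℝ) (c : ℝ)
    (hee : ∀ i j, B (ee i) (ee j) = 0)
    (hff : ∀ i j, B (ff i) (ff j) = 0)
    (hef : ∀ i j, B (ee i) (ff j) = if i = j then c else 0)
    (hfe : ∀ i j, B (ff i) (ee j) = if i = j then -c else 0)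
    (u v : E n) : B u v = c * omega0 u v := by
  have hBe : ∀ i, B (ee i) v = v.2 i * c := by
    intro i
    rw [col_expand]
    rw [Finset.sum_eq_single i (fun j _ hj => by
      rw [hee, hef, if_neg (Ne.symm hj)]; ring) (by simp)]
    rw [hee, hef, if_pos rfl]; ring
  have hBf : ∀ i, B (ff i) v = -(v.1 i * c) := by
    intro i
    rw [col_expand]
    rw [Finset.sum_eq_single i (fun j _ hj => by
      rw [hff, hfe, if_neg (Ne.symm hj)]; ring) (by simp)]
    rw [hff, hfe, if_pos rfl]; ring
  rw [row_expand]
  simp only [hBe, hBf, omega0, Finset.mul_sum]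
  refine Finset.sum_congr rfl fun i _ => by ring



open Real AddCircle

noncomputable section

instance fact2pi : Fact (0 < 2 * Real.pi) := ⟨by positivity⟩

/-- The `n`-torus. -/
abbrev Torus (n : ℕ) := Fin n → AddCircle (2 * Real.pi)

/-- cosine on the circle -/
def cosA (x : AddCircle (2 * Real.pi)) : ℝ := Real.Angle.cos x
/-- sine on the circle -/
def sinA (x : AddCircle (2 * Real.pi)) : ℝ := Real.Angle.sin x

lemma cosA_coe (t : ℝ) : cosA ((t : ℝ) : AddCircle (2 * Real.pi)) = Real.cos t :=
  Real.Angle.cos_coe t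

lemma sinA_coe (t : ℝ) : sinA ((t : ℝ) : AddCircle (2 * Real.pi)) = Real.sin t :=
  Real.Angle.sin_coe t

lemma continuous_cosA : Continuous cosA := Real.Angle.continuous_cos
lemma continuous_sinA : Continuous sinA := Real.Angle.continuous_sin

lemma cos_sin_determine {z z' : AddCircle (2 * Real.pi)}
    (hc : cosA z = cosA z') (hs : sinA z = sinA z') : z = z' := by
  induction z using QuotientAddGroup.induction_on with
  | H a =>
    induction z' using QuotientAddGroup.induction_on with
    | H b =>
      exact Real.Angle.cos_sin_inj (θ := a) (ψ := b) hc hs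

/-- a choice of lift -/
def ℓ (x : AddCircle (2 * Real.pi)) : ℝ := (AddCircle.equivIco (2 * Real.pi) 0 x : ℝ)

lemma coe_ℓ (x : AddCircle (2 * Real.pi)) : ((ℓ x : ℝ) : AddCircle (2 * Real.pi)) = x :=
  (AddCircle.equivIco (2 * Real.pi) 0).symm_apply_apply x

/-- The chart of the torus centred at `x`. -/
def torusChart {n : ℕ} (x : Torus n) :
    OpenPartialHomeomorph (Torus n) (EuclideanSpace ℝ (Fin n)) :=
  (OpenPartialHomeomorph.pi fun i =>
      (AddCircle.openPartialHomeomorphCoe (2 * Real.pi) (ℓ (x i) + Real.pi)).symm).transHomeomorph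
    (EuclideanSpace.equiv (Fin n) ℝ).symm.toHomeomorph

lemma torusChart_symm_apply {n : ℕ} (x : Torus n) (θ : EuclideanSpace ℝ (Fin n)) :
    (torusChart x).symm θ = fun i => ((θ i : ℝ) : AddCircle (2 * Real.pi)) := rfl

lemma torusChart_source {n : ℕ} (x : Torus n) :
    (torusChart x).source =
      Set.pi Set.univ fun i => {((ℓ (x i) + Real.pi : ℝ) : AddCircle (2 * Real.pi))}ᶜ := by
  rfl

lemma pi_ne_zero_circle :
    (((Real.pi : ℝ)) : AddCircle (2 * Real.pi)) ≠ 0 := by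
  rw [Ne, AddCircle.coe_eq_zero_iff_of_mem_Ico ⟨Real.pi_pos.le, by linarith [Real.pi_pos]⟩]
  exact Real.pi_ne_zero

lemma self_mem_torusChart_source {n : ℕ} (x : Torus n) : x ∈ (torusChart x).source := by
  rw [torusChart_source]
  intro i _
  simp only [Set.mem_compl_iff, Set.mem_singleton_iff]
  intro h
  apply pi_ne_zero_circle
  calc ((Real.pi : ℝ) : AddCircle (2 * Real.pi))
      = ((ℓ (x i) + Real.pi : ℝ) : AddCircle (2 * Real.pi)) - ((ℓ (x i) : ℝ)) := by
        rw [AddCircle.coe_add]; abel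
    _ = x i - x i := by rw [← h, coe_ℓ]
    _ = 0 := sub_self _

instance torusCharted (n : ℕ) : ChartedSpace (EuclideanSpace ℝ (Fin n)) (Torus n) where
  atlas := Set.range torusChart
  chartAt x := torusChart x
  mem_chart_source x := self_mem_torusChart_source x
  chart_mem_atlas x := ⟨x, rfl⟩

end



noncomputable section

lemma torusChart_apply {n : ℕ} (x : Torus n) (z : Torus n) :
    torusChart x z = fun i =>
      ((AddCircle.equivIco (2 * Real.pi) (ℓ (x i) + Real.pi) (z i)) : ℝ) := rfl

lemma coe_torusChart_apply {n : ℕ} (x : Torus n) (z : Torus n) (i : Fin n) :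
    ((torusChart x z i : ℝ) : AddCircle (2 * Real.pi)) = z i :=
  (AddCircle.equivIco (2 * Real.pi) (ℓ (x i) + Real.pi)).symm_apply_apply (z i)

lemma contDiffOn_of_locally_translation {n : ℕ} {s : Set (EuclideanSpace ℝ (Fin n))}
    (hs : IsOpen s) {f : EuclideanSpace ℝ (Fin n) → EuclideanSpace ℝ (Fin n)}
    (hf : ContinuousOn f s)
    (hper : ∀ θ ∈ s, ∀ i,
      (((f θ i : ℝ)) : AddCircle (2 * Real.pi)) = ((θ i : ℝ) : AddCircle (2 * Real.pi))) :
    ContDiffOn ℝ ((⊤ : ℕ∞) : WithTop ℕ∞) f s := by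
  intro θ₀ hθ₀
  have hmem : s ∈ nhds θ₀ := hs.mem_nhds hθ₀
  have hD : ∀ θ ∈ s, ∀ i, ∃ k : ℤ, f θ i - θ i = 2 * Real.pi * k := by
    intro θ hθ i
    exact Real.Angle.angle_eq_iff_two_pi_dvd_sub.mp (hper θ hθ i)
  have h1 : ∀ i, ∀ᶠ θ in nhds θ₀, f θ i - θ i = f θ₀ i - θ₀ i := by
    intro i
    have hci : ContinuousAt (fun θ => f θ i - θ i) θ₀ := by
      have : ContinuousWithinAt (fun θ => f θ i - θ i) s θ₀ := by
        exact (ContinuousAt.comp_continuousWithinAt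
          ((EuclideanSpace.proj (𝕜 := ℝ) i).continuous.continuousAt)
          (hf.continuousWithinAt hθ₀)).sub
          ((EuclideanSpace.proj (𝕜 := ℝ) i).continuous.continuousWithinAt)
      exact this.continuousAt hmem
    have hsmall : ∀ᶠ θ in nhds θ₀, |(f θ i - θ i) - (f θ₀ i - θ₀ i)| < 2 * Real.pi := by
      have := Metric.tendsto_nhds.mp hci (2 * Real.pi) (by positivity)
      filter_upwards [this] with θ hθ
      rwa [Real.dist_eq] at hθ
    filter_upwards [hsmall, hmem] with θ hθs hθmem
    obtain ⟨k, hk⟩ := hD θ hθmem i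
    obtain ⟨k', hk'⟩ := hD θ₀ hθ₀ i
    rw [hk, hk'] at hθs ⊢
    have : |(k : ℝ) - k'| < 1 := by
      rw [← mul_sub, abs_mul, abs_of_pos (by positivity : (0:ℝ) < 2 * Real.pi)] at hθs
      have hπ : (0:ℝ) < 2 * Real.pi := by positivity
      nlinarith [abs_nonneg ((k:ℝ) - k')]
    have hkk : k = k' := by
      have : |k - k'| < 1 := by
        have := this
        rw [← Int.cast_sub, ← Int.cast_abs] at this
        exact_mod_cast this
      have := Int.abs_lt_one_iff.mp this
      omega
    rw [hkk]
  have hev : f =ᶠ[nhds θ₀] fun θ => θ + (f θ₀ - θ₀) := by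
    filter_upwards [Filter.eventually_all.mpr h1] with θ hθ
    apply (EuclideanSpace.equiv (Fin n) ℝ).injective
    funext i
    have := hθ i
    show f θ i = θ i + (f θ₀ - θ₀) i
    have h2 : (f θ₀ - θ₀) i = f θ₀ i - θ₀ i := rfl
    rw [h2]; linarith
  have hca : ContDiffAt ℝ ((⊤ : ℕ∞) : WithTop ℕ∞) f θ₀ := by
    have h2 : ContDiffAt ℝ ((⊤ : ℕ∞) : WithTop ℕ∞) (fun θ : EuclideanSpace ℝ (Fin n) => θ + (f θ₀ - θ₀)) θ₀ :=
      (contDiff_id.add contDiff_const).contDiffAt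
    exact h2.congr_of_eventuallyEq hev
  exact hca.contDiffWithinAt

open scoped Manifold in
instance torusSmooth (n : ℕ) : IsManifold (𝓡 n) (⊤ : ℕ∞) (Torus n) := by
  apply isManifold_of_contDiffOn
  rintro e e' ⟨x, rfl⟩ ⟨y, rfl⟩
  simp only [modelWithCornersSelf_coe, modelWithCornersSelf_coe_symm, Function.comp_id,
    Function.id_comp, Set.preimage_id, Set.range_id, Set.inter_univ]
  refine contDiffOn_of_locally_translation ((torusChart x).symm.trans (torusChart y)).open_source
    ((torusChart x).symm.trans (torusChart y)).continuousOn ?_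
  intro θ hθ i
  have h1 : (((torusChart x).symm.trans (torusChart y)) θ) =
      torusChart y ((torusChart x).symm θ) := rfl
  rw [h1, coe_torusChart_apply]
  rw [torusChart_symm_apply]

end

open scoped Manifold
noncomputable section

variable {n : ℕ}

/-- the basic "product of circles" map -/
def circ (z : Torus n) : E n := (fun i => cosA (z i), fun i => sinA (z i))

/-- inclusion of angles into the torus -/
def angles (ξ : Fin n → ℝ) : Torus n := fun i => ((ξ i : ℝ) : AddCircle (2 * Real.pi))

/-- The torus embedding with centre offset `p`, radius `r`, linear map `A`, base angles `ξ`. -/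
def tEmb (p : E n) (r : ℝ) (A : E n →L[ℝ] E n) (ξ : Fin n → ℝ) (z : Torus n) : E n :=
  p + r • A (circ z - circ (angles ξ))

/-- The moving frame, as a linear map. -/
def frameLM (x : Torus n) : EuclideanSpace ℝ (Fin n) →ₗ[ℝ] E n where
  toFun v := (fun i => -sinA (x i) * v i, fun i => cosA (x i) * v i)
  map_add' u v := by
    have h : ∀ i, (u + v) i = u i + v i := fun _ => rfl
    refine Prod.ext ?_ ?_ <;> funext i <;>
      simp only [Prod.fst_add, Prod.snd_add, Pi.add_apply, h] <;> ring
  map_smul' c v := by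
    have h : ∀ i, (c • v) i = c * v i := fun _ => rfl
    refine Prod.ext ?_ ?_ <;> funext i <;>
      simp only [Prod.smul_fst, Prod.smul_snd, Pi.smul_apply, RingHom.id_apply,
        smul_eq_mul, h] <;> ring

def frameL (x : Torus n) : EuclideanSpace ℝ (Fin n) →L[ℝ] E n :=
  LinearMap.toContinuousLinearMap (frameLM x)

@[simp] lemma frameL_apply (x : Torus n) (v : EuclideanSpace ℝ (Fin n)) :
    frameL x v = (fun i => -sinA (x i) * v i, fun i => cosA (x i) * v i) := rfl

/-- the full derivative of `tEmb` at `x` -/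
def tDeriv (r : ℝ) (A : E n →L[ℝ] E n) (x : Torus n) : EuclideanSpace ℝ (Fin n) →L[ℝ] E n :=
  r • (A.comp (frameL x))

lemma continuous_circ : Continuous (circ (n := n)) := by
  refine Continuous.prodMk ?_ ?_ <;> exact continuous_pi fun i =>
    (by first
      | exact continuous_cosA.comp (continuous_apply i)
      | exact continuous_sinA.comp (continuous_apply i))

lemma continuous_tEmb (p : E n) (r : ℝ) (A : E n →L[ℝ] E n) (ξ : Fin n → ℝ) :
    Continuous (tEmb p r A ξ) :=
  continuous_const.add ((A.continuous.comp
    (continuous_circ.sub continuous_const)).const_smul r)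

/-- The chart representation of `tEmb`. -/
lemma tEmb_written (p : E n) (r : ℝ) (A : E n →L[ℝ] E n) (ξ : Fin n → ℝ) (x : Torus n)
    (θ : EuclideanSpace ℝ (Fin n)) :
    tEmb p r A ξ ((torusChart x).symm θ) =
      p + r • A ((fun i => Real.cos (θ i), fun i => Real.sin (θ i)) - circ (angles ξ)) := by
  show p + r • A (circ ((torusChart x).symm θ) - circ (angles ξ)) = _
  have hc : circ ((torusChart x).symm θ) =
      ((fun i => Real.cos (θ i), fun i => Real.sin (θ i)) : E n) := by
    rw [torusChart_symm_apply]
    refine Prod.ext ?_ ?_ <;> funext i <;>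
      first
        | exact cosA_coe (θ i)
        | exact sinA_coe (θ i)
  rw [hc]

lemma hasMFDerivAt_tEmb (p : E n) (r : ℝ) (A : E n →L[ℝ] E n) (ξ : Fin n → ℝ) (x : Torus n) :
    HasMFDerivAt (𝓡 n) 𝓘(ℝ, E n) (tEmb p r A ξ) x (tDeriv r A x) := by
  constructor
  · exact (continuous_tEmb p r A ξ).continuousAt
  · -- the chart representative
    set b : EuclideanSpace ℝ (Fin n) := (extChartAt (𝓡 n) x) x with hb
    have hbx : ∀ i, ((b i : ℝ) : AddCircle (2 * Real.pi)) = x i := by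
      intro i
      have : b = torusChart x x := rfl
      rw [this]
      exact coe_torusChart_apply x x i
    have hcos : ∀ i, Real.cos (b i) = cosA (x i) := fun i => by rw [← hbx i, cosA_coe]
    have hsin : ∀ i, Real.sin (b i) = sinA (x i) := fun i => by rw [← hbx i, sinA_coe]
    -- explicit smooth model map
    set g : EuclideanSpace ℝ (Fin n) → E n := fun θ =>
      p + r • A ((fun i => Real.cos (θ i), fun i => Real.sin (θ i)) - circ (angles ξ)) with hg
    have hwg : (writtenInExtChartAt (𝓡 n) 𝓘(ℝ, E n) x (tEmb p r A ξ) : _ → E n) = g := by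
      funext θ
      show (extChartAt 𝓘(ℝ, E n) (tEmb p r A ξ x)) (tEmb p r A ξ (((extChartAt (𝓡 n) x).symm) θ)) = g θ
      rw [extChartAt_model_space_eq_id]
      have h2 : ((extChartAt (𝓡 n) x).symm) θ = (torusChart x).symm θ := rfl
      rw [PartialEquiv.refl_coe, h2]
      simp only [id]
      exact tEmb_written p r A ξ x θ
    -- derivative of g at b
    have hD1 : HasFDerivAt (fun θ : EuclideanSpace ℝ (Fin n) => (fun i => Real.cos (θ i) : Fin n → ℝ))
        (ContinuousLinearMap.pi fun i => (-Real.sin (b i)) • (EuclideanSpace.proj i : EuclideanSpace ℝ (Fin n) →L[ℝ] ℝ)) b := by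
      rw [hasFDerivAt_pi']
      intro i
      rw [ContinuousLinearMap.proj_pi]
      have hp : HasFDerivAt (fun θ : EuclideanSpace ℝ (Fin n) => θ i)
          (EuclideanSpace.proj (𝕜 := ℝ) i) b := (EuclideanSpace.proj (𝕜 := ℝ) i).hasFDerivAt
      exact (Real.hasDerivAt_cos (b i)).comp_hasFDerivAt b hp
    have hD2 : HasFDerivAt (fun θ : EuclideanSpace ℝ (Fin n) => (fun i => Real.sin (θ i) : Fin n → ℝ))
        (ContinuousLinearMap.pi fun i => (Real.cos (b i)) • (EuclideanSpace.proj i : EuclideanSpace ℝ (Fin n) →L[ℝ] ℝ)) b := by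
      rw [hasFDerivAt_pi']
      intro i
      rw [ContinuousLinearMap.proj_pi]
      have hp : HasFDerivAt (fun θ : EuclideanSpace ℝ (Fin n) => θ i)
          (EuclideanSpace.proj (𝕜 := ℝ) i) b := (EuclideanSpace.proj (𝕜 := ℝ) i).hasFDerivAt
      exact (Real.hasDerivAt_sin (b i)).comp_hasFDerivAt b hp
    have hDg : HasFDerivAt g (tDeriv r A x) b := by
      have h3 := (((hD1.prodMk hD2).sub_const (circ (angles ξ))).const_smul r).const_add p
      have h4 := A.hasFDerivAt.comp b (((hD1.prodMk hD2).sub_const (circ (angles ξ))))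
      have h5 := (h4.const_smul r).const_add p
      refine h5.congr_fderiv (Eq.symm ?_)
      refine ContinuousLinearMap.ext fun v => ?_
      show tDeriv r A x v = r • (A _)
      unfold tDeriv
      simp only [ContinuousLinearMap.smul_apply, ContinuousLinearMap.comp_apply]
      congr 1
      congr 1
      refine Prod.ext ?_ ?_ <;> funext i <;>
        simp [frameL_apply, hcos, hsin, ContinuousLinearMap.pi_apply,
          ContinuousLinearMap.smul_apply, mul_comm]
    rw [hwg]
    have : Set.range (𝓡 n : _) = Set.univ := by
      simp
    rw [this]
    exact hDg.hasFDerivWithinAt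
  
lemma mfderiv_tEmb (p : E n) (r : ℝ) (A : E n →L[ℝ] E n) (ξ : Fin n → ℝ) (x : Torus n) :
    mfderiv (𝓡 n) 𝓘(ℝ, E n) (tEmb p r A ξ) x = tDeriv r A x :=
  (hasMFDerivAt_tEmb p r A ξ x).mfderiv

end

open scoped Manifold
noncomputable section

variable {n : ℕ}

lemma contDiff_coords (i : Fin n) :
    ContDiff ℝ ((⊤ : ℕ∞) : WithTop ℕ∞) (fun θ : EuclideanSpace ℝ (Fin n) => θ i) :=
  (EuclideanSpace.proj (𝕜 := ℝ) i).contDiff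

lemma contMDiff_tEmb (p : E n) (r : ℝ) (A : E n →L[ℝ] E n) (ξ : Fin n → ℝ) :
    ContMDiff (𝓡 n) 𝓘(ℝ, E n) ((⊤ : ℕ∞) : WithTop ℕ∞) (tEmb p r A ξ) := by
  intro x
  rw [contMDiffAt_iff]
  refine ⟨(continuous_tEmb p r A ξ).continuousAt, ?_⟩
  have hg : ContDiff ℝ ((⊤ : ℕ∞) : WithTop ℕ∞) (fun θ : EuclideanSpace ℝ (Fin n) =>
      p + r • A ((fun i => Real.cos (θ i), fun i => Real.sin (θ i)) - circ (angles ξ))) := by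
    refine contDiff_const.add (ContDiff.const_smul r (A.contDiff.comp ?_))
    refine ContDiff.sub ?_ contDiff_const
    refine ContDiff.prodMk ?_ ?_ <;> refine contDiff_pi.mpr fun i => ?_
    · exact Real.contDiff_cos.comp (contDiff_coords i)
    · exact Real.contDiff_sin.comp (contDiff_coords i)
  have hwg : (fun θ => (extChartAt 𝓘(ℝ, E n) (tEmb p r A ξ x))
      (tEmb p r A ξ ((extChartAt (𝓡 n) x).symm θ))) = fun θ =>
      p + r • A ((fun i => Real.cos (θ i), fun i => Real.sin (θ i)) - circ (angles ξ)) := by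
    funext θ
    rw [extChartAt_model_space_eq_id, PartialEquiv.refl_coe]
    have h2 : ((extChartAt (𝓡 n) x).symm) θ = (torusChart x).symm θ := rfl
    show ((tEmb p r A ξ ((extChartAt (𝓡 n) x).symm θ)) : E n) = _
    rw [h2]
    exact tEmb_written p r A ξ x θ
  refine (hg.contDiffAt.congr_of_eventuallyEq ?_).contDiffWithinAt
  exact Filter.Eventually.of_forall (fun θ => congrFun hwg θ)

lemma tEmb_injective (p : E n) {r : ℝ} {A : E n →L[ℝ] E n} (ξ : Fin n → ℝ)
    (hr : r ≠ 0) (hA : Function.Injective A) : Function.Injective (tEmb p r A ξ) := by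
  intro z z' h
  have h1 : r • A (circ z - circ (angles ξ)) = r • A (circ z' - circ (angles ξ)) :=
    add_left_cancel h
  have h2 : circ z = circ z' := by
    have h3 := hA (smul_right_injective (E n) hr h1)
    exact sub_left_injective h3
  funext i
  exact cos_sin_determine (congrFun (congrArg Prod.fst h2) i)
    (congrFun (congrArg Prod.snd h2) i)

lemma tDeriv_injective {r : ℝ} {A : E n →L[ℝ] E n} (x : Torus n)
    (hr : r ≠ 0) (hA : Function.Injective A) : Function.Injective (tDeriv r A x) := by
  intro u v h
  have h1 : frameL x u = frameL x v := by
    apply hA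
    apply smul_right_injective (E n) hr
    exact h
  have hsc := Real.Angle.cos_sq_add_sin_sq
  ext i
  have hs : -sinA (x i) * u i = -sinA (x i) * v i := congrFun (congrArg Prod.fst h1) i
  have hc : cosA (x i) * u i = cosA (x i) * v i := congrFun (congrArg Prod.snd h1) i
  have h2 : cosA (x i) ^ 2 + sinA (x i) ^ 2 = 1 := Real.Angle.cos_sq_add_sin_sq (x i)
  show u i = v i
  nlinarith [hs, hc, h2, sq_nonneg (u i - v i)]

lemma omega0_tDeriv {r : ℝ} {A : E n →L[ℝ] E n} (x : Torus n)
    (hAsymp : ∀ u v : E n, omega0 (A u) (A v) = omega0 u v)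
    (u v : EuclideanSpace ℝ (Fin n)) :
    omega0 (tDeriv r A x u) (tDeriv r A x v) = 0 := by
  show omega0 (r • A (frameL x u)) (r • A (frameL x v)) = 0
  have h1 : omega0 (r • A (frameL x u)) (r • A (frameL x v))
      = r * (r * omega0 (A (frameL x u)) (A (frameL x v))) := by
    simp only [← OmL_apply, map_smul, LinearMap.smul_apply, smul_eq_mul]
  rw [h1, hAsymp]
  have h2 : omega0 (frameL x u) (frameL x v) = 0 := by
    refine Finset.sum_eq_zero fun i _ => ?_
    show (-sinA (x i) * u i) * (cosA (x i) * v i)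
      - (cosA (x i) * u i) * (-sinA (x i) * v i) = 0
    ring
  rw [h2]; ring

lemma tEmb_base (p : E n) (r : ℝ) (A : E n →L[ℝ] E n) (ξ : Fin n → ℝ) :
    tEmb p r A ξ (angles ξ) = p := by
  unfold tEmb
  rw [sub_self, map_zero, smul_zero, add_zero]

lemma norm_circ_le (z : Torus n) : ‖circ z‖ ≤ 1 := by
  have habs : ∀ w : AddCircle (2 * Real.pi), |cosA w| ≤ 1 ∧ |sinA w| ≤ 1 := by
    intro w
    have h2 : cosA w ^ 2 + sinA w ^ 2 = 1 := Real.Angle.cos_sq_add_sin_sq w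
    constructor <;> rw [abs_le] <;> constructor <;> nlinarith [sq_nonneg (cosA w), sq_nonneg (sinA w)]
  rw [Prod.norm_def]
  refine max_le ?_ ?_ <;> refine (pi_norm_le_iff_of_nonneg zero_le_one).mpr fun i => ?_
  · simpa [Real.norm_eq_abs, circ] using (habs (z i)).1
  · simpa [Real.norm_eq_abs, circ] using (habs (z i)).2

lemma tEmb_dist (p : E n) (r : ℝ) (A : E n →L[ℝ] E n) (ξ : Fin n → ℝ) (z : Torus n) :
    ‖tEmb p r A ξ z - p‖ ≤ |r| * (‖A‖ * 2) := by
  have h1 : tEmb p r A ξ z - p = r • A (circ z - circ (angles ξ)) := by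
    unfold tEmb; abel
  rw [h1, norm_smul, Real.norm_eq_abs]
  refine mul_le_mul_of_nonneg_left ?_ (abs_nonneg r)
  refine le_trans (A.le_opNorm _) ?_
  refine mul_le_mul_of_nonneg_left ?_ (norm_nonneg A)
  refine le_trans (norm_sub_le _ _) ?_
  have := norm_circ_le z
  have := norm_circ_le (angles ξ)
  linarith

end

open scoped Manifold
noncomputable section

variable {n : ℕ}

/-- the tangent frame vector of the standard torus -/
def tv (i : Fin n) (ξ : Fin n → ℝ) : E n :=
  (Pi.single i (-Real.sin (ξ i)), Pi.single i (Real.cos (ξ i)))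

lemma frameL_angles_single (ξ : Fin n → ℝ) (i : Fin n) :
    frameL (angles ξ) (EuclideanSpace.single i (1:ℝ)) = tv i ξ := by
  have hc : ∀ k, cosA (angles ξ k) = Real.cos (ξ k) := fun k => cosA_coe (ξ k)
  have hs : ∀ k, sinA (angles ξ k) = Real.sin (ξ k) := fun k => sinA_coe (ξ k)
  rw [frameL_apply]
  unfold tv
  refine Prod.ext ?_ ?_ <;> funext k <;> dsimp only
  · rcases eq_or_ne k i with rfl | hk
    · simp [hs, EuclideanSpace.single_apply, Pi.single_apply]
    · simp [EuclideanSpace.single_apply, Pi.single_apply, hk]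
  · rcases eq_or_ne k i with rfl | hk
    · simp [hc, EuclideanSpace.single_apply, Pi.single_apply]
    · simp [EuclideanSpace.single_apply, Pi.single_apply, hk]

lemma tDeriv_single (r : ℝ) (A : E n →L[ℝ] E n) (ξ : Fin n → ℝ) (i : Fin n) :
    tDeriv r A (angles ξ) (EuclideanSpace.single i (1:ℝ)) = r • A (tv i ξ) := by
  show r • A (frameL (angles ξ) (EuclideanSpace.single i (1:ℝ))) = r • A (tv i ξ)
  rw [frameL_angles_single]

/-- nondegeneracy of omega0 -/
lemma omega0_ff_right (u : E n) (i : Fin n) : omega0 u (ff i) = u.1 i := by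
  unfold omega0 ff
  rw [Finset.sum_eq_single i (fun k _ hk => by simp [Pi.single_apply, hk]) (by simp)]
  simp

lemma omega0_ee_right (u : E n) (i : Fin n) : omega0 u (ee i) = -(u.2 i) := by
  unfold omega0 ee
  rw [Finset.sum_eq_single i (fun k _ hk => by simp [Pi.single_apply, hk]) (by simp)]
  simp

lemma omega0_nondeg (u : E n) (h : ∀ v, omega0 u v = 0) : u = 0 := by
  refine Prod.ext ?_ ?_ <;> funext i
  · have := h (ff i); rw [omega0_ff_right] at this; exact this
  · have := h (ee i); rw [omega0_ee_right] at this; simpa [neg_eq_zero] using this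

lemma symp_injective {A : E n →L[ℝ] E n}
    (hAsymp : ∀ u v : E n, omega0 (A u) (A v) = omega0 u v) : Function.Injective A := by
  rw [injective_iff_map_eq_zero]
  intro u hu
  refine omega0_nondeg u fun v => ?_
  rw [← hAsymp u v, hu]
  show omega0 0 (A v) = 0
  unfold omega0
  refine Finset.sum_eq_zero fun k _ => ?_
  show (0:ℝ) * _ - 0 * _ = 0
  ring

/-- rotation by the 3-4-5 angle in the (i,j) plane, both in q and p coordinates -/
def rotAux (i j : Fin n) (q : Fin n → ℝ) : Fin n → ℝ := fun k =>
  if k = i then (3/5) * q i - (4/5) * q j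
  else if k = j then (4/5) * q i + (3/5) * q j
  else q k

def rotLM (i j : Fin n) : E n →ₗ[ℝ] E n where
  toFun u := (rotAux i j u.1, rotAux i j u.2)
  map_add' u v := by
    refine Prod.ext ?_ ?_ <;> funext k <;>
      · show rotAux i j (_ + _) k = rotAux i j _ k + rotAux i j _ k
        unfold rotAux
        split_ifs <;> simp [Prod.fst_add, Prod.snd_add] <;> ring
  map_smul' c v := by
    refine Prod.ext ?_ ?_ <;> funext k <;>
      · show rotAux i j (c • _) k = c * rotAux i j _ k
        unfold rotAux
        split_ifs <;> simp [Prod.smul_fst, Prod.smul_snd, smul_eq_mul] <;> ring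

def rotL (i j : Fin n) : E n →L[ℝ] E n := LinearMap.toContinuousLinearMap (rotLM i j)

@[simp] lemma rotL_apply (i j : Fin n) (u : E n) :
    rotL i j u = (rotAux i j u.1, rotAux i j u.2) := rfl

lemma rotL_symp {i j : Fin n} (hij : i ≠ j) (u v : E n) :
    omega0 (rotL i j u) (rotL i j v) = omega0 u v := by
  unfold omega0
  rw [rotL_apply, rotL_apply]
  have hsplit : ∀ (F : Fin n → ℝ),
      ∑ k, F k = (∑ k ∈ Finset.univ \ {i, j}, F k) + (F i + F j) := by
    intro F
    rw [← Finset.sum_pair hij]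
    exact (Finset.sum_sdiff (Finset.subset_univ {i, j})).symm
  rw [hsplit, hsplit (fun k => u.1 k * v.2 k - u.2 k * v.1 k)]
  congr 1
  · refine Finset.sum_congr rfl fun k hk => ?_
    rw [Finset.mem_sdiff] at hk
    have hki : k ≠ i := fun h => hk.2 (by simp [h])
    have hkj : k ≠ j := fun h => hk.2 (by simp [h])
    show rotAux i j u.1 k * rotAux i j v.2 k - rotAux i j u.2 k * rotAux i j v.1 k = _
    unfold rotAux
    simp [hki, hkj]
  · show (rotAux i j u.1 i * rotAux i j v.2 i - rotAux i j u.2 i * rotAux i j v.1 i)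
      + (rotAux i j u.1 j * rotAux i j v.2 j - rotAux i j u.2 j * rotAux i j v.1 j) = _
    unfold rotAux
    have hji : ¬ (j = i) := Ne.symm hij
    have hijf : ¬ (i = j) := hij
    simp only [if_pos rfl, hji, hijf, if_false, if_true]
    ring

lemma rotL_ee (i j : Fin n) (hij : i ≠ j) :
    rotL i j (ee i) = (3/5 : ℝ) • ee i + (4/5 : ℝ) • ee j := by
  unfold ee
  rw [rotL_apply]
  refine Prod.ext ?_ ?_ <;> funext k <;>
    simp only [Prod.fst_add, Prod.smul_fst, Prod.snd_add, Prod.smul_snd, Pi.add_apply,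
      Pi.smul_apply, smul_eq_mul, smul_zero, Pi.zero_apply]
  · unfold rotAux
    rcases eq_or_ne k i with rfl | hki
    · simp [Pi.single_apply, hij, Ne.symm hij]
    · rcases eq_or_ne k j with rfl | hkj
      · simp [Pi.single_apply, hij, Ne.symm hij, hki]
      · simp [Pi.single_apply, hki, hkj]
  · unfold rotAux
    split_ifs <;> simp only [Pi.zero_apply] <;> ring

lemma rotL_ff (i j : Fin n) (hij : i ≠ j) :
    rotL i j (ff j) = (-(4/5) : ℝ) • ff i + (3/5 : ℝ) • ff j := by
  unfold ff
  rw [rotL_apply]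
  refine Prod.ext ?_ ?_ <;> funext k <;>
    simp only [Prod.fst_add, Prod.smul_fst, Prod.snd_add, Prod.smul_snd, Pi.add_apply,
      Pi.smul_apply, smul_eq_mul, smul_zero, Pi.zero_apply]
  · unfold rotAux
    split_ifs <;> simp only [Pi.zero_apply] <;> ring
  · unfold rotAux
    rcases eq_or_ne k i with rfl | hki
    · simp [Pi.single_apply, hij, Ne.symm hij]
    · rcases eq_or_ne k j with rfl | hkj
      · simp [Pi.single_apply, hij, Ne.symm hij, hki]
      · simp [Pi.single_apply, hki, hkj]

end
end Helper

namespace Helper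
open scoped Manifold
noncomputable section

lemma extraction {n : ℕ} {U : Set (E n)} (hUopen : IsOpen U) {φ : E n → E n}
    (H : ∀ (L : Type) [TopologicalSpace L] [ChartedSpace (EuclideanSpace ℝ (Fin n)) L]
        [IsManifold (𝓡 n) (⊤ : ℕ∞) L] [CompactSpace L] [ConnectedSpace L]
        (ι : L → E n), IsLagrangianEmbedding ι → Set.range ι ⊆ U →
        IsLagrangianEmbedding (φ ∘ ι))
    {p : E n} (hp : p ∈ U) (hφd : DifferentiableAt ℝ φ p)
    (A : E n →L[ℝ] E n) (hAsymp : ∀ u v : E n, omega0 (A u) (A v) = omega0 u v)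
    (ξ : Fin n → ℝ) (i j : Fin n) :
    omega0 (fderiv ℝ φ p (A (tv i ξ))) (fderiv ℝ φ p (A (tv j ξ))) = 0 := by
  have hA : Function.Injective A := symp_injective hAsymp
  obtain ⟨ε, hε, hball⟩ := Metric.isOpen_iff.mp hUopen p hp
  set r : ℝ := ε / (2 * (‖A‖ + 1)) with hrdef
  have hApos : (0:ℝ) < ‖A‖ + 1 := by positivity
  have hr : 0 < r := by positivity
  have hrb : |r| * (‖A‖ * 2) < ε := by
    rw [abs_of_pos hr, hrdef, div_mul_eq_mul_div, div_lt_iff₀ (by positivity)]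
    nlinarith [norm_nonneg A]
  have hrange : Set.range (tEmb p r A ξ) ⊆ U := by
    rintro _ ⟨z, rfl⟩
    apply hball
    rw [Metric.mem_ball, dist_eq_norm]
    exact lt_of_le_of_lt (tEmb_dist p r A ξ z) hrb
  have hLag : IsLagrangianEmbedding (tEmb p r A ξ) := by
    refine ⟨contMDiff_tEmb p r A ξ, tEmb_injective p ξ hr.ne' hA, ?_, ?_⟩
    · intro x
      rw [mfderiv_tEmb]
      exact tDeriv_injective x hr.ne' hA
    · intro x u v
      rw [mfderiv_tEmb]
      exact omega0_tDeriv x hAsymp u v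
  obtain ⟨-, -, -, h4⟩ := H (Torus n) (tEmb p r A ξ) hLag hrange
  have hb : tEmb p r A ξ (angles ξ) = p := tEmb_base p r A ξ
  have hιd : MDifferentiableAt (𝓡 n) 𝓘(ℝ, E n) (tEmb p r A ξ) (angles ξ) :=
    (hasMFDerivAt_tEmb p r A ξ (angles ξ)).mdifferentiableAt
  have hφd' : MDifferentiableAt 𝓘(ℝ, E n) 𝓘(ℝ, E n) φ (tEmb p r A ξ (angles ξ)) := by
    rw [hb]; exact hφd.mdifferentiableAt
  have hDD : mfderiv 𝓘(ℝ, E n) 𝓘(ℝ, E n) φ (tEmb p r A ξ (angles ξ)) = fderiv ℝ φ p := by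
    rw [hb, mfderiv_eq_fderiv]
  have hkey : ∀ w : EuclideanSpace ℝ (Fin n),
      mfderiv (𝓡 n) 𝓘(ℝ, E n) (φ ∘ tEmb p r A ξ) (angles ξ) w
        = fderiv ℝ φ p (tDeriv r A (angles ξ) w) := by
    intro w
    rw [mfderiv_comp (x := angles ξ) hφd' hιd, hDD, mfderiv_tEmb]
    rfl
  have h := h4 (angles ξ) (EuclideanSpace.single i (1:ℝ)) (EuclideanSpace.single j (1:ℝ))
  rw [hkey, hkey, tDeriv_single, tDeriv_single, map_smul, map_smul] at h
  have h2 : omega0 (r • fderiv ℝ φ p (A (tv i ξ))) (r • fderiv ℝ φ p (A (tv j ξ)))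
      = r * (r * omega0 (fderiv ℝ φ p (A (tv i ξ))) (fderiv ℝ φ p (A (tv j ξ)))) := by
    simp only [← OmL_apply, map_smul, LinearMap.smul_apply, smul_eq_mul]
  rw [h2] at h
  rcases mul_eq_zero.mp h with h' | h'
  · exact absurd h' hr.ne'
  rcases mul_eq_zero.mp h' with h'' | h''
  · exact absurd h'' hr.ne'
  exact h''

end
end Helper

namespace Helper
open scoped Manifold
noncomputable section

/-- angle selection -/
def ξsel {n : ℕ} (a b : ℝ) (i j : Fin n) : Fin n → ℝ :=
  fun k => if k = i then a else if k = j then b else 0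

lemma tv_ee {n : ℕ} (ξ : Fin n → ℝ) (i : Fin n) (h : ξ i = -(Real.pi/2)) :
    tv i ξ = ee i := by
  unfold tv ee
  rw [h]
  rw [Real.cos_neg, Real.sin_neg, Real.cos_pi_div_two, Real.sin_pi_div_two]
  rw [neg_neg, Pi.single_zero]

lemma tv_ff {n : ℕ} (ξ : Fin n → ℝ) (i : Fin n) (h : ξ i = 0) :
    tv i ξ = ff i := by
  unfold tv ff
  rw [h, Real.cos_zero, Real.sin_zero, neg_zero, Pi.single_zero]

/-- the conformal factor -/
def cval (n : ℕ) [NeZero n] (φ : E n → E n) (p : E n) : ℝ :=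
  omega0 (fderiv ℝ φ p (ee 0)) (fderiv ℝ φ p (ff 0))

lemma pointwise_conformal {n : ℕ} [NeZero n] {U : Set (E n)} (hUopen : IsOpen U)
    {φ : E n → E n}
    (H : ∀ (L : Type) [TopologicalSpace L] [ChartedSpace (EuclideanSpace ℝ (Fin n)) L]
        [IsManifold (𝓡 n) (⊤ : ℕ∞) L] [CompactSpace L] [ConnectedSpace L]
        (ι : L → E n), IsLagrangianEmbedding ι → Set.range ι ⊆ U →
        IsLagrangianEmbedding (φ ∘ ι))
    {p : E n} (hp : p ∈ U) (hφd : DifferentiableAt ℝ φ p) (u v : E n) :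
    omega0 (fderiv ℝ φ p u) (fderiv ℝ φ p v) = cval n φ p * omega0 u v := by
  set D := fderiv ℝ φ p with hD
  set B : E n →ₗ[ℝ] E n →ₗ[ℝ] ℝ :=
    (OmL n).compl₁₂ (D.toLinearMap) (D.toLinearMap) with hBdef
  have hBapp : ∀ x y, B x y = omega0 (D x) (D y) := fun x y => rfl
  have hBanti : ∀ x y, B x y = - B y x := fun x y => by
    rw [hBapp, hBapp]; exact omega0_antisymm _ _
  have hrel : ∀ (ξ : Fin n → ℝ) (i j : Fin n), B (tv i ξ) (tv j ξ) = 0 := by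
    intro ξ i j
    have h := extraction hUopen H hp hφd (ContinuousLinearMap.id ℝ (E n))
      (fun u v => rfl) ξ i j
    simpa [hBapp] using h
  have hξi : ∀ (a b : ℝ) (i j : Fin n), ξsel a b i j i = a := by
    intro a b i j; simp [ξsel]
  have hξj : ∀ (a b : ℝ) (i j : Fin n), i ≠ j → ξsel a b i j j = b := by
    intro a b i j hij; simp [ξsel, Ne.symm hij]
  -- basis relations
  have hee : ∀ i j, B (ee i) (ee j) = 0 := by
    intro i j
    rcases eq_or_ne i j with rfl | hij
    · rw [hBapp]; exact omega0_self _
    · have h := hrel (ξsel (-(Real.pi/2)) (-(Real.pi/2)) i j) i j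
      rwa [tv_ee _ _ (hξi _ _ i j), tv_ee _ _ (hξj _ _ i j hij)] at h
  have hff : ∀ i j, B (ff i) (ff j) = 0 := by
    intro i j
    rcases eq_or_ne i j with rfl | hij
    · rw [hBapp]; exact omega0_self _
    · have h := hrel (ξsel 0 0 i j) i j
      rwa [tv_ff _ _ (hξi _ _ i j), tv_ff _ _ (hξj _ _ i j hij)] at h
  have hef' : ∀ i j, i ≠ j → B (ee i) (ff j) = 0 := by
    intro i j hij
    have h := hrel (ξsel (-(Real.pi/2)) 0 i j) i j
    rwa [tv_ee _ _ (hξi _ _ i j), tv_ff _ _ (hξj _ _ i j hij)] at h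
  have hfe' : ∀ i j, i ≠ j → B (ff i) (ee j) = 0 := by
    intro i j hij
    rw [hBanti, hef' j i (Ne.symm hij), neg_zero]
  -- equality of diagonal values
  have hcc : ∀ i j, i ≠ j → B (ee i) (ff i) = B (ee j) (ff j) := by
    intro i j hij
    have h := extraction hUopen H hp hφd (rotL i j) (rotL_symp hij)
      (ξsel (-(Real.pi/2)) 0 i j) i j
    have h' : B (rotL i j (tv i (ξsel (-(Real.pi/2)) 0 i j)))
        (rotL i j (tv j (ξsel (-(Real.pi/2)) 0 i j))) = 0 := h
    rw [tv_ee _ _ (hξi _ _ i j), tv_ff _ _ (hξj _ _ i j hij)] at h'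
    rw [rotL_ee i j hij, rotL_ff i j hij] at h'
    simp only [map_add, map_smul, LinearMap.add_apply, LinearMap.smul_apply,
      smul_eq_mul] at h'
    rw [hef' i j hij, hef' j i (Ne.symm hij)] at h'
    linarith
  have hc : ∀ i, B (ee i) (ff i) = cval n φ p := by
    intro i
    have hc0 : B (ee 0) (ff 0) = cval n φ p := rfl
    rcases eq_or_ne i 0 with rfl | hi0
    · exact hc0
    · rw [hcc i 0 hi0]; exact hc0
  have hfinal := bilinear_eq_smul_omega B (cval n φ p) hee hff
    (fun i j => by
      rcases eq_or_ne i j with rfl | hij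
      · rw [if_pos rfl]; exact hc i
      · rw [if_neg hij]; exact hef' i j hij)
    (fun i j => by
      rcases eq_or_ne i j with rfl | hij
      · rw [if_pos rfl, hBanti, hc]
      · rw [if_neg hij]; exact hfe' i j hij)
    u v
  rw [← hBapp u v, hfinal]

end
end Helper

namespace Helper
open scoped Manifold
noncomputable section

lemma one_le_inftop : (1 : WithTop ℕ∞) ≤ ((⊤:ℕ∞) : WithTop ℕ∞) := by
  exact_mod_cast (le_top : (1:ℕ∞) ≤ ⊤)

lemma two_le_inftop : (1 : WithTop ℕ∞) + 1 ≤ ((⊤:ℕ∞) : WithTop ℕ∞) := by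
  have h : ((2:ℕ∞) : WithTop ℕ∞) ≤ ((⊤:ℕ∞) : WithTop ℕ∞) := WithTop.coe_le_coe.mpr le_top
  have h2 : (1 : WithTop ℕ∞) + 1 = ((2:ℕ∞) : WithTop ℕ∞) := by norm_cast
  rw [h2]; exact h

/-- omega0 as a continuous bilinear map -/
def OmCL (n : ℕ) : E n →L[ℝ] E n →L[ℝ] ℝ :=
  LinearMap.toContinuousLinearMap
  { toFun := fun u => LinearMap.toContinuousLinearMap (OmL n u)
    map_add' := by
      intro a b
      refine ContinuousLinearMap.ext fun w => ?_
      show OmL n (a + b) w = OmL n a w + OmL n b w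
      simp [map_add]
    map_smul' := by
      intro m a
      refine ContinuousLinearMap.ext fun w => ?_
      show OmL n (m • a) w = m • OmL n a w
      simp [map_smul] }

@[simp] lemma OmCL_apply {n : ℕ} (u v : E n) : OmCL n u v = omega0 u v := rfl

lemma cval_deriv_zero {n : ℕ} [NeZero n] (hn : 2 ≤ n) {U : Set (E n)} (hUopen : IsOpen U)
    {φ : E n → E n}
    (H : ∀ (L : Type) [TopologicalSpace L] [ChartedSpace (EuclideanSpace ℝ (Fin n)) L]
        [IsManifold (𝓡 n) (⊤ : ℕ∞) L] [CompactSpace L] [ConnectedSpace L]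
        (ι : L → E n), IsLagrangianEmbedding ι → Set.range ι ⊆ U →
        IsLagrangianEmbedding (φ ∘ ι))
    (hφC : ContDiffOn ℝ (⊤ : ℕ∞) φ U)
    {p : E n} (hp : p ∈ U) :
    HasFDerivAt (cval n φ) (0 : E n →L[ℝ] ℝ) p := by
  have hUn : U ∈ nhds p := hUopen.mem_nhds hp
  have hCAt : ContDiffAt ℝ ((⊤:ℕ∞) : WithTop ℕ∞) φ p := hφC.contDiffAt hUn
  have hd : ∀ q ∈ U, DifferentiableAt ℝ φ q := fun q hq =>
    (hφC.contDiffAt (hUopen.mem_nhds hq)).differentiableAt (by simp)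
  set D2 : E n →L[ℝ] E n →L[ℝ] E n := fderiv ℝ (fderiv ℝ φ) p with hD2def
  have hD2 : HasFDerivAt (fderiv ℝ φ) D2 p :=
    ((hCAt.fderiv_right (m := 1) two_le_inftop).differentiableAt one_ne_zero).hasFDerivAt
  have hev : ∀ᶠ y in nhds p, HasFDerivAt φ (fderiv ℝ φ y) y := by
    filter_upwards [hUn] with y hy
    exact (hd y hy).hasFDerivAt
  have hsymm : ∀ w u' : E n, D2 w u' = D2 u' w := fun w u' =>
    second_derivative_symmetric_of_eventually hev hD2 w u'
  -- derivative of the coefficient functions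
  have hder : ∀ u v : E n, HasFDerivAt (fun q => omega0 (fderiv ℝ φ q u) (fderiv ℝ φ q v))
      ((OmCL n).precompR (E n) (fderiv ℝ φ p u) ((ContinuousLinearMap.apply ℝ (E n) v).comp D2)
        + (OmCL n).precompL (E n) ((ContinuousLinearMap.apply ℝ (E n) u).comp D2)
          (fderiv ℝ φ p v)) p := by
    intro u v
    have hu : HasFDerivAt (fun q => fderiv ℝ φ q u)
        ((ContinuousLinearMap.apply ℝ (E n) u).comp D2) p :=
      (ContinuousLinearMap.apply ℝ (E n) u).hasFDerivAt.comp p hD2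
    have hv : HasFDerivAt (fun q => fderiv ℝ φ q v)
        ((ContinuousLinearMap.apply ℝ (E n) v).comp D2) p :=
      (ContinuousLinearMap.apply ℝ (E n) v).hasFDerivAt.comp p hD2
    exact (OmCL n).hasFDerivAt_of_bilinear hu hv
  -- evaluation of that derivative
  have hder_app : ∀ u v w : E n,
      ((OmCL n).precompR (E n) (fderiv ℝ φ p u) ((ContinuousLinearMap.apply ℝ (E n) v).comp D2)
        + (OmCL n).precompL (E n) ((ContinuousLinearMap.apply ℝ (E n) u).comp D2)
          (fderiv ℝ φ p v)) w
      = omega0 (fderiv ℝ φ p u) (D2 w v) + omega0 (D2 w u) (fderiv ℝ φ p v) := by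
    intro u v w
    rfl
  -- the derivative of cval
  have hcval : HasFDerivAt (cval n φ)
      ((OmCL n).precompR (E n) (fderiv ℝ φ p (ee 0)) ((ContinuousLinearMap.apply ℝ (E n) (ff 0)).comp D2)
        + (OmCL n).precompL (E n) ((ContinuousLinearMap.apply ℝ (E n) (ee 0)).comp D2)
          (fderiv ℝ φ p (ff 0))) p := hder (ee 0) (ff 0)
  set C := (OmCL n).precompR (E n) (fderiv ℝ φ p (ee 0)) ((ContinuousLinearMap.apply ℝ (E n) (ff 0)).comp D2)
        + (OmCL n).precompL (E n) ((ContinuousLinearMap.apply ℝ (E n) (ee 0)).comp D2)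
          (fderiv ℝ φ p (ff 0)) with hCdef
  -- identification of the derivative of each coefficient function
  have hid : ∀ u v : E n,
      ((OmCL n).precompR (E n) (fderiv ℝ φ p u) ((ContinuousLinearMap.apply ℝ (E n) v).comp D2)
        + (OmCL n).precompL (E n) ((ContinuousLinearMap.apply ℝ (E n) u).comp D2)
          (fderiv ℝ φ p v)) = omega0 u v • C := by
    intro u v
    refine HasFDerivAt.unique (hder u v) ?_
    have h1 : HasFDerivAt (fun q => cval n φ q * omega0 u v) (omega0 u v • C) p :=
      hcval.mul_const (omega0 u v)
    refine h1.congr_of_eventuallyEq ?_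
    filter_upwards [hUn] with q hq
    exact pointwise_conformal hUopen H hq (hd q hq) u v
  -- the trilinear S and its values
  have hSval : ∀ u v w : E n,
      omega0 (fderiv ℝ φ p u) (D2 w v) + omega0 (D2 w u) (fderiv ℝ φ p v)
        = omega0 u v * C w := by
    intro u v w
    rw [← hder_app u v w, hid u v]
    simp
  -- cyclic identity
  have hcyc : ∀ u v w : E n,
      omega0 u v * C w + omega0 v w * C u + omega0 w u * C v = 0 := by
    intro u v w
    rw [← hSval u v w, ← hSval v w u, ← hSval w u v]
    have h1 : D2 u w = D2 w u := hsymm u w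
    have h2 : D2 v u = D2 u v := hsymm v u
    have h3 : D2 w v = D2 v w := hsymm w v
    rw [h1, h2, h3]
    have ha : ∀ x y : E n, omega0 x y = - omega0 y x := omega0_antisymm
    rw [ha (fderiv ℝ φ p u) (D2 v w), ha (fderiv ℝ φ p v) (D2 w u),
      ha (fderiv ℝ φ p w) (D2 u v)]
    ring
  -- conclude C = 0 using n ≥ 2
  let i1 : Fin n := ⟨1, by omega⟩
  have hi1v : (i1 : Fin n).val = 1 := rfl
  have h01 : (0 : Fin n) ≠ i1 := by
    intro h
    have h2 : (0 : Fin n).val = i1.val := congrArg Fin.val h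
    rw [Fin.val_zero, hi1v] at h2
    omega
  have hef00 : omega0 (ee (0 : Fin n)) (ff 0) = 1 := by rw [omega0_ee_ff]; simp
  have hef11 : omega0 (ee i1) (ff i1) = 1 := by rw [omega0_ee_ff]; simp
  have hCe : C (ee (0 : Fin n)) = 0 := by
    have h := hcyc (ee i1) (ff i1) (ee 0)
    have ha : omega0 (ff i1) (ee (0:Fin n)) = 0 := by
      rw [omega0_ee_right]
      simp [ff, Pi.single_apply, Ne.symm h01]
    have hb : omega0 (ee (0:Fin n)) (ee i1) = 0 := omega0_ee_ee _ _
    rw [hef11, ha, hb] at h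
    linarith
  have hCf : C (ff (0 : Fin n)) = 0 := by
    have h := hcyc (ee i1) (ff i1) (ff 0)
    have ha : omega0 (ff i1) (ff (0:Fin n)) = 0 := omega0_ff_ff _ _
    have hb : omega0 (ff (0:Fin n)) (ee i1) = 0 := by
      rw [omega0_ee_right]
      simp [ff, Pi.single_apply, h01]
    rw [hef11, ha, hb] at h
    linarith
  have hC0 : C = 0 := by
    refine ContinuousLinearMap.ext fun w => ?_
    have h := hcyc (ee 0) (ff 0) w
    have ha : omega0 (ff (0:Fin n)) w * C (ee 0) = 0 := by rw [hCe]; ring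
    have hb : omega0 w (ee (0:Fin n)) * C (ff 0) = 0 := by rw [hCf]; ring
    rw [hef00, ha, hb] at h
    show C w = 0
    linarith
  rw [← hC0]
  exact hcval

end
end Helper

namespace Helper
open scoped Manifold
noncomputable section

/-- local constancy of cval -/
lemma cval_locally_const {n : ℕ} [NeZero n] (hn : 2 ≤ n) {U : Set (E n)} (hUopen : IsOpen U)
    {φ : E n → E n}
    (H : ∀ (L : Type) [TopologicalSpace L] [ChartedSpace (EuclideanSpace ℝ (Fin n)) L]
        [IsManifold (𝓡 n) (⊤ : ℕ∞) L] [CompactSpace L] [ConnectedSpace L]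
        (ι : L → E n), IsLagrangianEmbedding ι → Set.range ι ⊆ U →
        IsLagrangianEmbedding (φ ∘ ι))
    (hφC : ContDiffOn ℝ (⊤ : ℕ∞) φ U)
    {p : E n} (hp : p ∈ U) : ∀ᶠ q in nhds p, cval n φ q = cval n φ p := by
  obtain ⟨ε, hε, hball⟩ := Metric.isOpen_iff.mp hUopen p hp
  have hconv : Convex ℝ (Metric.ball p ε) := convex_ball p ε
  have hderiv : ∀ q ∈ Metric.ball p ε, HasFDerivAt (cval n φ) 0 q := fun q hq =>
    cval_deriv_zero hn hUopen H hφC (hball hq)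
  have hconst : ∀ q ∈ Metric.ball p ε, cval n φ q = cval n φ p := by
    intro q hq
    refine hconv.is_const_of_fderivWithin_eq_zero (𝕜 := ℝ)
      (fun y hy => (hderiv y hy).differentiableAt.differentiableWithinAt) ?_ hq
      (Metric.mem_ball_self hε)
    intro y hy
    rw [fderivWithin_of_isOpen Metric.isOpen_ball hy]
    exact (hderiv y hy).fderiv
  filter_upwards [Metric.ball_mem_nhds p hε] with q hq
  exact hconst q hq

lemma cval_const {n : ℕ} [NeZero n] (hn : 2 ≤ n) {U : Set (E n)} (hUopen : IsOpen U)
    (hUconn : IsConnected U) {φ : E n → E n}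
    (H : ∀ (L : Type) [TopologicalSpace L] [ChartedSpace (EuclideanSpace ℝ (Fin n)) L]
        [IsManifold (𝓡 n) (⊤ : ℕ∞) L] [CompactSpace L] [ConnectedSpace L]
        (ι : L → E n), IsLagrangianEmbedding ι → Set.range ι ⊆ U →
        IsLagrangianEmbedding (φ ∘ ι))
    (hφC : ContDiffOn ℝ (⊤ : ℕ∞) φ U)
    {p₀ : E n} (hp₀ : p₀ ∈ U) : ∀ p ∈ U, cval n φ p = cval n φ p₀ := by
  set c₀ := cval n φ p₀
  set A := {q | q ∈ U ∧ cval n φ q = c₀} with hAdef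
  set B := {q | q ∈ U ∧ cval n φ q ≠ c₀} with hBdef
  have hAopen : IsOpen A := by
    rw [isOpen_iff_mem_nhds]
    rintro q ⟨hqU, hqc⟩
    filter_upwards [cval_locally_const hn hUopen H hφC hqU, hUopen.mem_nhds hqU] with y hy hyU
    exact ⟨hyU, by rw [hy, hqc]⟩
  have hBopen : IsOpen B := by
    rw [isOpen_iff_mem_nhds]
    rintro q ⟨hqU, hqc⟩
    filter_upwards [cval_locally_const hn hUopen H hφC hqU, hUopen.mem_nhds hqU] with y hy hyU
    exact ⟨hyU, by rw [hy]; exact hqc⟩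
  have hsub : U ⊆ A ∪ B := by
    intro q hq
    by_cases h : cval n φ q = c₀
    · exact Or.inl ⟨hq, h⟩
    · exact Or.inr ⟨hq, h⟩
  have hdisj : Disjoint A B := by
    rw [Set.disjoint_iff]
    rintro q ⟨⟨_, h1⟩, ⟨_, h2⟩⟩
    exact absurd h1 h2
  have hfinal := hUconn.isPreconnected.subset_left_of_subset_union hAopen hBopen hdisj hsub
    ⟨p₀, hp₀, hp₀, rfl⟩
  intro p hp
  exact (hfinal hp).2

lemma cval_ne_zero {n : ℕ} [NeZero n] {U : Set (E n)} (hUopen : IsOpen U)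
    {φ : E n → E n}
    (H : ∀ (L : Type) [TopologicalSpace L] [ChartedSpace (EuclideanSpace ℝ (Fin n)) L]
        [IsManifold (𝓡 n) (⊤ : ℕ∞) L] [CompactSpace L] [ConnectedSpace L]
        (ι : L → E n), IsLagrangianEmbedding ι → Set.range ι ⊆ U →
        IsLagrangianEmbedding (φ ∘ ι))
    {p : E n} (hp : p ∈ U) (hφd : DifferentiableAt ℝ φ p)
    (hinj : Function.Injective (fderiv ℝ φ p)) : cval n φ p ≠ 0 := by
  intro h0
  have hsurj : Function.Surjective (fderiv ℝ φ p) := by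
    have := (LinearMap.injective_iff_surjective
      (f := (fderiv ℝ φ p).toLinearMap)).mp hinj
    exact this
  obtain ⟨u, hu⟩ := hsurj (ee 0)
  obtain ⟨v, hv⟩ := hsurj (ff 0)
  have h := pointwise_conformal hUopen H hp hφd u v
  rw [hu, hv, h0, zero_mul] at h
  rw [omega0_ee_ff] at h
  simp at h

/-- The forward direction. -/
lemma forward_dir {n : ℕ} {U : Set (E n)} (hUopen : IsOpen U) {φ : E n → E n}
    (hφ : SmoothEmbeddingOn φ U) {c : ℝ}
    (hconf : ∀ p ∈ U, ∀ u v : E n,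
      omega0 (fderiv ℝ φ p u) (fderiv ℝ φ p v) = c * omega0 u v)
    (L : Type) [TopologicalSpace L] [ChartedSpace (EuclideanSpace ℝ (Fin n)) L]
    [IsManifold (𝓡 n) (⊤ : ℕ∞) L] [CompactSpace L] [ConnectedSpace L]
    (ι : L → E n) (hι : IsLagrangianEmbedding ι) (hrange : Set.range ι ⊆ U) :
    IsLagrangianEmbedding (φ ∘ ι) := by
  obtain ⟨h1, h2, h3, h4⟩ := hι
  have hmem : ∀ x : L, ι x ∈ U := fun x => hrange ⟨x, rfl⟩
  have hφm : ContMDiffOn 𝓘(ℝ, E n) 𝓘(ℝ, E n) ((⊤ : ℕ∞) : WithTop ℕ∞) φ U := contMDiffOn_iff_contDiffOn.mpr hφ.1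
  have hφd : ∀ x : L, MDifferentiableAt 𝓘(ℝ, E n) 𝓘(ℝ, E n) φ (ι x) := fun x =>
    (((hφ.1.contDiffAt (hUopen.mem_nhds (hmem x))).differentiableAt
      (by simp))).mdifferentiableAt
  have hιd : ∀ x : L, MDifferentiableAt (𝓡 n) 𝓘(ℝ, E n) ι x := fun x =>
    h1.mdifferentiableAt (by simp)
  have hcomp : ∀ x : L, mfderiv (𝓡 n) 𝓘(ℝ, E n) (φ ∘ ι) x
      = (fderiv ℝ φ (ι x)).comp (mfderiv (𝓡 n) 𝓘(ℝ, E n) ι x) := by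
    intro x
    rw [mfderiv_comp (x := x) (hφd x) (hιd x), mfderiv_eq_fderiv]
    rfl
  refine ⟨hφm.comp_contMDiff h1 hmem, ?_, ?_, ?_⟩
  · intro a b hab
    exact h2 (hφ.2.1 (hmem a) (hmem b) hab)
  · intro x
    rw [hcomp x]
    have : Function.Injective (fderiv ℝ φ (ι x)) := hφ.2.2 (ι x) (hmem x)
    exact this.comp (h3 x)
  · intro x u v
    rw [hcomp x]
    have h5 := hconf (ι x) (hmem x) ((mfderiv (𝓡 n) 𝓘(ℝ, E n) ι x) u)
      ((mfderiv (𝓡 n) 𝓘(ℝ, E n) ι x) v)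
    rw [h4 x u v, mul_zero] at h5
    exact h5

end
end Helper

/-- An embedding of a connected open subset of `ℝ^{2n}` (with `n ≥ 2`) is conformally
symplectic if and only if it maps every embedded Lagrangian submanifold (i.e. the image of
every Lagrangian embedding of a closed smooth `n`-manifold) contained in its domain to a
Lagrangian submanifold. -/
theorem conformally_symplectic_iff_preserves_lagrangians
    (n : ℕ) (hn : 2 ≤ n) (U : Set (E n)) (hUopen : IsOpen U) (hUconn : IsConnected U)
    (φ : E n → E n) (hφ : SmoothEmbeddingOn φ U) :
    (∃ c : ℝ, c ≠ 0 ∧ ∀ p ∈ U, ∀ u v : E n,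
        omega0 (fderiv ℝ φ p u) (fderiv ℝ φ p v) = c * omega0 u v) ↔
    (∀ (L : Type) [TopologicalSpace L] [ChartedSpace (EuclideanSpace ℝ (Fin n)) L]
        [IsManifold (𝓡 n) (⊤ : ℕ∞) L] [CompactSpace L] [ConnectedSpace L]
        (ι : L → E n), IsLagrangianEmbedding ι → Set.range ι ⊆ U →
        IsLagrangianEmbedding (φ ∘ ι)) := by
  haveI : NeZero n := ⟨by omega⟩
  constructor
  · rintro ⟨c, hc, hconf⟩
    intro L _ _ _ _ _ ι hι hrange
    exact Helper.forward_dir hUopen hφ hconf L ι hι hrange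
  · intro H
    obtain ⟨p₀, hp₀⟩ := hUconn.nonempty
    refine ⟨Helper.cval n φ p₀, ?_, ?_⟩
    · exact Helper.cval_ne_zero hUopen H hp₀
        ((hφ.1.contDiffAt (hUopen.mem_nhds hp₀)).differentiableAt (by simp))
        (hφ.2.2 p₀ hp₀)
    · intro p hp u v
      rw [Helper.pointwise_conformal hUopen H hp
        ((hφ.1.contDiffAt (hUopen.mem_nhds hp)).differentiableAt (by simp)) u v]
      rw [Helper.cval_const hn hUopen hUconn H hφ.1 hp₀ p hp]
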